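/- For all x, w ∈ ℝ^d, the L-SVRG gradient estimator g = ∇f_v(x) − ∇f_v(w) + ∇f(w) satisfies E[‖g − ∇f(x*)‖²] ≤ 4 ℒ · D_f(x, x*) + 2 σ²(w), where σ²(w) = E[‖∇f_v(w) − ∇f_v(x*) − (∇f(w) − ∇f(x*))‖²]. -/

import Mathlib

open MeasureTheory Finset
open scoped RealInnerProductSpace

lemma integrable_comp_of_finite_range {Ω : Type*} [MeasurableSpace Ω] (μ : Measure Ω)
    [IsFiniteMeasure μ] {α : Type*} [MeasurableSpace α] {v : Ω → α}
    (hm : Measurable v) (hf : (Set.range v).Finite) (F : α → ℝ) (hF : Measurable F) :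
    Integrable (fun ω => F (v ω)) μ := by
  have hrange : (Set.range fun ω => F (v ω)).Finite := by
    refine (hf.image F).subset ?_
    rintro _ ⟨ω, rfl⟩
    exact ⟨v ω, ⟨ω, rfl⟩, rfl⟩
  have habs : (Set.range fun ω => ‖F (v ω)‖).Finite := by
    refine (hrange.image fun t => ‖t‖).subset ?_
    rintro _ ⟨ω, rfl⟩
    exact ⟨F (v ω), ⟨ω, rfl⟩, rfl⟩
  rcases habs.bddAbove with ⟨C, hC⟩
  exact (integrable_const C).mono' (hF.comp hm).aestronglyMeasurable
    (Filter.Eventually.of_forall fun ω => hC ⟨ω, rfl⟩)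

theorem stmt_8
    {d n : ℕ} (hn : 0 < n)
    {Ω : Type*} [MeasurableSpace Ω] (μ : Measure Ω) [IsProbabilityMeasure μ]
    (f : Fin n → EuclideanSpace ℝ (Fin d) → ℝ)
    (f' : Fin n → EuclideanSpace ℝ (Fin d) → EuclideanSpace ℝ (Fin d))
    (Li : Fin n → ℝ)
    (hsmooth : ∀ i x y, f i y ≤ f i x + ⟪f' i x, y - x⟫ + Li i / 2 * ‖y - x‖ ^ 2)
    (hconv : ∀ i x y, f i x + ⟪f' i x, y - x⟫ ≤ f i y)
    -- the sampling vector
    (v : Ω → Fin n → ℝ) (hv_meas : Measurable v) (hv_fin : (Set.range v).Finite)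
    (hv_nonneg : ∀ ω i, 0 ≤ v ω i) (hv_mean : ∀ i, ∫ ω, v ω i ∂μ = 1)
    -- x* minimizes f = (1/n) Σ f_i
    (xstar : EuclideanSpace ℝ (Fin d))
    (hmin : ∀ y, (n : ℝ)⁻¹ * ∑ i, f i xstar ≤ (n : ℝ)⁻¹ * ∑ i, f i y)
    -- expected smoothness with constant ℒ ≥ 0
    (𝓛 : ℝ) (h𝓛 : 0 ≤ 𝓛)
    (hES : ∀ z : EuclideanSpace ℝ (Fin d),
      ∫ ω, ‖(n : ℝ)⁻¹ • ∑ i, v ω i • f' i z - (n : ℝ)⁻¹ • ∑ i, v ω i • f' i xstar‖ ^ 2 ∂μ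
      ≤ 2 * 𝓛 * ((n : ℝ)⁻¹ * ∑ i, f i z - (n : ℝ)⁻¹ * ∑ i, f i xstar
          - ⟪(n : ℝ)⁻¹ • ∑ j, f' j xstar, z - xstar⟫))
    (x w : EuclideanSpace ℝ (Fin d)) :
    ∫ ω, ‖((n : ℝ)⁻¹ • ∑ i, v ω i • f' i x - (n : ℝ)⁻¹ • ∑ i, v ω i • f' i w
          + (n : ℝ)⁻¹ • ∑ j, f' j w)
        - (n : ℝ)⁻¹ • ∑ j, f' j xstar‖ ^ 2 ∂μ
    ≤ 4 * 𝓛 * ((n : ℝ)⁻¹ * ∑ i, f i x - (n : ℝ)⁻¹ * ∑ i, f i xstar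
          - ⟪(n : ℝ)⁻¹ • ∑ j, f' j xstar, x - xstar⟫)
      + 2 * ∫ ω, ‖(n : ℝ)⁻¹ • ∑ i, v ω i • f' i w - (n : ℝ)⁻¹ • ∑ i, v ω i • f' i xstar
          - ((n : ℝ)⁻¹ • ∑ j, f' j w - (n : ℝ)⁻¹ • ∑ j, f' j xstar)‖ ^ 2 ∂μ := by
  set Fv : (Fin n → ℝ) → EuclideanSpace ℝ (Fin d) → EuclideanSpace ℝ (Fin d) :=
    fun u z => (n : ℝ)⁻¹ • ∑ i, u i • f' i z with hFv
  set G : EuclideanSpace ℝ (Fin d) → EuclideanSpace ℝ (Fin d) :=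
    fun z => (n : ℝ)⁻¹ • ∑ j, f' j z with hG
  have hcontFv : ∀ z, Continuous fun u : Fin n → ℝ => Fv u z := by
    intro z
    exact (continuous_finset_sum _ fun i _ =>
      ((continuous_apply i).smul (continuous_const : Continuous fun _ : Fin n → ℝ => f' i z))).const_smul ((n : ℝ)⁻¹)
  -- integrability helpers
  have hintA : Integrable (fun ω => ‖Fv (v ω) x - Fv (v ω) xstar‖ ^ 2) μ := by
    refine integrable_comp_of_finite_range μ hv_meas hv_fin
      (fun u => ‖Fv u x - Fv u xstar‖ ^ 2) ?_
    exact ((((hcontFv x).sub (hcontFv xstar)).norm.pow 2)).measurable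
  have hintB : Integrable
      (fun ω => ‖Fv (v ω) w - Fv (v ω) xstar - (G w - G xstar)‖ ^ 2) μ := by
    refine integrable_comp_of_finite_range μ hv_meas hv_fin
      (fun u => ‖Fv u w - Fv u xstar - (G w - G xstar)‖ ^ 2) ?_
    exact (((((hcontFv w).sub (hcontFv xstar)).sub continuous_const).norm.pow 2)).measurable
  have hintL : Integrable
      (fun ω => ‖(Fv (v ω) x - Fv (v ω) w + G w) - G xstar‖ ^ 2) μ := by
    refine integrable_comp_of_finite_range μ hv_meas hv_fin
      (fun u => ‖(Fv u x - Fv u w + G w) - G xstar‖ ^ 2) ?_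
    exact (((((hcontFv x).sub (hcontFv w)).add continuous_const).sub
      continuous_const).norm.pow 2).measurable
  -- pointwise bound
  have hpt : ∀ ω, ‖(Fv (v ω) x - Fv (v ω) w + G w) - G xstar‖ ^ 2
      ≤ 2 * ‖Fv (v ω) x - Fv (v ω) xstar‖ ^ 2
        + 2 * ‖Fv (v ω) w - Fv (v ω) xstar - (G w - G xstar)‖ ^ 2 := by
    intro ω
    have hdecomp : (Fv (v ω) x - Fv (v ω) w + G w) - G xstar
        = (Fv (v ω) x - Fv (v ω) xstar) - (Fv (v ω) w - Fv (v ω) xstar - (G w - G xstar)) := by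
      abel
    rw [hdecomp]
    set a := Fv (v ω) x - Fv (v ω) xstar
    set b := Fv (v ω) w - Fv (v ω) xstar - (G w - G xstar)
    have h1 : ‖a - b‖ ≤ ‖a‖ + ‖b‖ := norm_sub_le a b
    have h2 : (0:ℝ) ≤ ‖a - b‖ := norm_nonneg _
    nlinarith [mul_self_le_mul_self h2 h1, sq_nonneg (‖a‖ - ‖b‖), norm_nonneg a, norm_nonneg b]
  have hmono : ∫ ω, ‖(Fv (v ω) x - Fv (v ω) w + G w) - G xstar‖ ^ 2 ∂μ
      ≤ ∫ ω, (2 * ‖Fv (v ω) x - Fv (v ω) xstar‖ ^ 2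
        + 2 * ‖Fv (v ω) w - Fv (v ω) xstar - (G w - G xstar)‖ ^ 2) ∂μ :=
    integral_mono hintL ((hintA.const_mul 2).add (hintB.const_mul 2)) hpt
  rw [integral_add (hintA.const_mul 2) (hintB.const_mul 2), integral_const_mul,
    integral_const_mul] at hmono
  have hESx := hES x
  show (∫ ω, ‖(Fv (v ω) x - Fv (v ω) w + G w) - G xstar‖ ^ 2 ∂μ)
    ≤ 4 * 𝓛 * ((n : ℝ)⁻¹ * ∑ i, f i x - (n : ℝ)⁻¹ * ∑ i, f i xstar
          - ⟪G xstar, x - xstar⟫)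
      + 2 * ∫ ω, ‖Fv (v ω) w - Fv (v ω) xstar - (G w - G xstar)‖ ^ 2 ∂μ
  linarith
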